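/- (Integral estimates of the speed.) (1) If α > 3, then ∫_{t₀}^{+∞} t·‖ẋ(t)‖² dt < +∞. (2) If α ≤ 3, then ∫_{t₀}^{+∞} t^p·‖ẋ(t)‖² dt < +∞ for every real p with p < α − 2; in particular, for α = 3, ∫_{t₀}^{+∞} t^{1−ε}·‖ẋ(t)‖² dt < +∞ for all ε > 0. -/

import Mathlib

open MeasureTheory Set
open scoped RealInnerProductSpace

lemma grad_ineq' {H : Type*} [NormedAddCommGroup H] [InnerProductSpace ℝ H] [CompleteSpace H]
    {Φ : H → ℝ} (hconv : ConvexOn ℝ Set.univ Φ) (hd : Differentiable ℝ Φ) (y z : H) :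
    Φ y - Φ z ≤ ⟪gradient Φ y, y - z⟫ := by
  set ψ : ℝ → ℝ := fun s => Φ (z + s • (y - z)) with hψ
  have hψconv : ConvexOn ℝ Set.univ ψ := by
    have := hconv.comp_affineMap (AffineMap.lineMap z y : ℝ →ᵃ[ℝ] H)
    simpa [ψ, Function.comp_def, AffineMap.lineMap_apply, add_comm, vsub_eq_sub,
      vadd_eq_add] using this
  have hψd : HasDerivAt ψ ⟪gradient Φ y, y - z⟫ 1 := by
    have hline : HasDerivAt (fun s : ℝ => z + s • (y - z)) (y - z) 1 := by
      simpa using ((hasDerivAt_id (1:ℝ)).smul_const (y - z)).const_add z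
    have hg := (hd (z + (1:ℝ) • (y - z))).hasGradientAt.hasFDerivAt
    have h2 := hg.comp_hasDerivAt 1 hline
    exact h2.congr_deriv (by simp [InnerProductSpace.toDual_apply_apply])
  have h := hψconv.slope_le_of_hasDerivAt (Set.mem_univ (0:ℝ)) (Set.mem_univ (1:ℝ)) one_pos hψd
  rw [slope_def_field] at h
  simp only [ψ] at h
  norm_num at h
  have e : ⟪gradient Φ y, y - z⟫ = (fderiv ℝ Φ y) y - (fderiv ℝ Φ y) z := by
    simp [InnerProductSpace.toDual_apply_apply]
  linarith [e]

set_option maxHeartbeats 2000000 in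
lemma main_integrable
    {H : Type*} [NormedAddCommGroup H] [InnerProductSpace ℝ H] [CompleteSpace H]
    (Φ : H → ℝ) (hΦconv : ConvexOn ℝ Set.univ Φ) (hΦC1 : ContDiff ℝ 1 Φ)
    (xstar : H) (hxstar : ∀ y : H, Φ xstar ≤ Φ y)
    (α t₀ : ℝ) (hα0 : 0 < α) (ht₀ : 0 < t₀)
    (x : ℝ → H) (hx : ContDiff ℝ 2 x)
    (hode : ∀ t : ℝ, t₀ ≤ t →
      deriv (deriv x) t + (α / t) • deriv x t + gradient Φ (x t) = 0)
    (p : ℝ) (hp1 : -1 ≤ p) (hp2 : p + 1 ≤ α - p) (hp3 : 3*(p+1) < 2*α) (hp4 : p ≤ 1) :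
    IntegrableOn (fun t : ℝ => t ^ p * ‖deriv x t‖ ^ 2) (Set.Ioi t₀) := by
  have hx1 : Differentiable ℝ x := hx.differentiable two_ne_zero
  have hx2 : ContDiff ℝ 1 (deriv x) := (contDiff_succ_iff_deriv.mp (by exact_mod_cast hx)).2.2
  have hv : Differentiable ℝ (deriv x) := hx2.differentiable one_ne_zero
  have hvc : Continuous (deriv x) := hv.continuous
  have hac : Continuous (deriv (deriv x)) := hx2.continuous_deriv le_rfl
  have hΦd : Differentiable ℝ Φ := hΦC1.differentiable one_ne_zero
  have hgradc : Continuous (fun y => gradient Φ y) := by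
    have h1 : Continuous (fderiv ℝ Φ) := hΦC1.continuous_fderiv one_ne_zero
    exact ((InnerProductSpace.toDual ℝ H).symm.continuous).comp h1
  have hxc : Continuous x := hx1.continuous
  set G : ℝ → ℝ := fun s => s^(p+1) * ((1/2)*‖deriv x s‖^2 + (Φ (x s) - Φ xstar))
      + (p+1) * (s^p * ⟪x s - xstar, deriv x s⟫)
      + ((p+1)*(α-p)/2) * (s^(p-1) * ‖x s - xstar‖^2) with hGdef
  set G' : ℝ → ℝ := fun s => (p+1)*s^p*((Φ (x s) - Φ xstar) - ⟪gradient Φ (x s), x s - xstar⟫)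
      + (3*(p+1)/2 - α)*(s^p*‖deriv x s‖^2)
      + ((p+1)*(α-p)*(p-1)/2)*(s^(p-2)*‖x s - xstar‖^2) with hG'def
  have key : ∀ t, t₀ ≤ t → HasDerivAt G (G' t) t := by
    intro t ht
    have htpos : 0 < t := lt_of_lt_of_le ht₀ ht
    have htne : t ≠ 0 := ne_of_gt htpos
    have hxd : HasDerivAt x (deriv x t) t := (hx1 t).hasDerivAt
    have hvd : HasDerivAt (deriv x) (deriv (deriv x) t) t := (hv t).hasDerivAt
    have hr : ∀ q : ℝ, HasDerivAt (fun s : ℝ => s ^ q) (q * t ^ (q - 1)) t :=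
      fun q => Real.hasDerivAt_rpow_const (Or.inl htne)
    have hn2v : HasDerivAt (fun s => ‖deriv x s‖^2)
        (⟪deriv x t, deriv (deriv x) t⟫ + ⟪deriv (deriv x) t, deriv x t⟫) t := by
      have h0 := HasDerivAt.inner ℝ hvd hvd
      have heq : (fun s => (inner ℝ (deriv x s) (deriv x s) : ℝ)) = fun s => ‖deriv x s‖^2 := by
        funext s; exact real_inner_self_eq_norm_sq _
      rwa [heq] at h0
    have hn2x : HasDerivAt (fun s => ‖x s - xstar‖^2)
        (⟪x t - xstar, deriv x t⟫ + ⟪deriv x t, x t - xstar⟫) t := by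
      have h0 := HasDerivAt.inner ℝ (hxd.sub_const xstar) (hxd.sub_const xstar)
      have heq : (fun s => (inner ℝ (x s - xstar) (x s - xstar) : ℝ)) = fun s => ‖x s - xstar‖^2 := by
        funext s; exact real_inner_self_eq_norm_sq _
      rwa [heq] at h0
    have hA : HasDerivAt (fun s => Φ (x s) - Φ xstar) ⟪gradient Φ (x t), deriv x t⟫ t := by
      have hg := (hΦd (x t)).hasGradientAt.hasFDerivAt
      have h2 := (hg.comp_hasDerivAt t hxd).sub_const (Φ xstar)
      exact h2.congr_deriv (by simp [InnerProductSpace.toDual_apply_apply])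
    have hinner : HasDerivAt (fun s => ⟪x s - xstar, deriv x s⟫)
        (⟪x t - xstar, deriv (deriv x) t⟫ + ⟪deriv x t, deriv x t⟫) t :=
      HasDerivAt.inner ℝ (hxd.sub_const xstar) hvd
    have hG1 := (hr (p+1)).mul ((hn2v.const_mul (1/2:ℝ)).add hA)
    have hG2 := ((hr p).mul hinner).const_mul (p+1)
    have hG3 := ((hr (p-1)).mul hn2x).const_mul ((p+1)*(α-p)/2)
    have total := (hG1.add hG2).add hG3
    refine total.congr_deriv (Eq.symm ?_)
    have ha_eq : deriv (deriv x) t = -((α / t) • deriv x t + gradient Φ (x t)) := by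
      have h := hode t ht
      rw [add_assoc] at h
      exact eq_neg_of_add_eq_zero_left h
    rw [hG'def, ha_eq]
    simp only [inner_neg_right, inner_add_right, real_inner_smul_right, inner_neg_left,
      inner_add_left, real_inner_smul_left, real_inner_self_eq_norm_sq, Pi.add_apply]
    rw [real_inner_comm (deriv x t) (gradient Φ (x t)),
      real_inner_comm (deriv x t) (x t - xstar),
      real_inner_comm (x t - xstar) (gradient Φ (x t))]
    rw [show p+1-1 = p from by ring, show p-1-1 = p-2 from by ring]
    have e1 : t^(p+1) = t^p * t := by
      rw [Real.rpow_add_one htne]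
    have e2 : t^p = t^(p-1) * t := by
      rw [← Real.rpow_add_one htne]; congr 1; ring
    have e3 : t^(p-1) = t^(p-2) * t := by
      rw [← Real.rpow_add_one htne]; congr 1; ring
    rw [e1, e2, e3]
    field_simp
    ring
  
  have hp1' : (0:ℝ) ≤ p + 1 := by linarith
  have hc : 0 < α - 3*(p+1)/2 := by linarith
  have hGpos : ∀ s, t₀ ≤ s → 0 ≤ G s := by
    intro s hs
    have hspos : 0 < s := lt_of_lt_of_le ht₀ hs
    have hsne : s ≠ 0 := ne_of_gt hspos
    have hu : 0 < s^(p-1) := Real.rpow_pos_of_pos hspos _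
    have e1 : s^(p+1) = s^(p-1) * s * s := by
      rw [show p+1 = (p-1)+1+1 from by ring, Real.rpow_add_one hsne, Real.rpow_add_one hsne]
    have e2 : s^p = s^(p-1) * s := by rw [← Real.rpow_add_one hsne]; congr 1; ring
    have hI : |(inner ℝ (x s - xstar) (deriv x s) : ℝ)| ≤ ‖x s - xstar‖ * ‖deriv x s‖ :=
      abs_real_inner_le_norm _ _
    have hI' := (abs_le.mp hI).1
    have hA : 0 ≤ Φ (x s) - Φ xstar := sub_nonneg.mpr (hxstar _)
    have hb2 : 0 ≤ (p+1)*(α-p) - (p+1)^2 := by nlinarith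
    have k1 : 0 ≤ s^(p-1) * (s*‖deriv x s‖ - (p+1)*‖x s - xstar‖)^2 :=
      mul_nonneg hu.le (sq_nonneg _)
    have k2 : 0 ≤ s^(p-1) * (((p+1)*(α-p) - (p+1)^2) * ‖x s - xstar‖^2) :=
      mul_nonneg hu.le (mul_nonneg hb2 (sq_nonneg _))
    have k3 : 0 ≤ s^(p-1)*s*s*(Φ (x s) - Φ xstar) := by
      have : (0:ℝ) ≤ s^(p-1)*s*s := by positivity
      exact mul_nonneg this hA
    have k4 : (p+1) * ((s^(p-1)*s) * (inner ℝ (x s - xstar) (deriv x s) : ℝ))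
        ≥ -((p+1) * ((s^(p-1)*s) * (‖x s - xstar‖ * ‖deriv x s‖))) := by
      have hnn : (0:ℝ) ≤ (p+1) * (s^(p-1)*s) := by positivity
      nlinarith [mul_le_mul_of_nonneg_left hI' hnn]
    simp only [hGdef]
    rw [e1, e2]
    nlinarith [k1, k2, k3, k4]
  have hG'le : ∀ s, t₀ ≤ s → G' s ≤ -((α - 3*(p+1)/2) * (s^p * ‖deriv x s‖^2)) := by
    intro s hs
    have hspos : 0 < s := lt_of_lt_of_le ht₀ hs
    have h1 : Φ (x s) - Φ xstar - (inner ℝ (gradient Φ (x s)) (x s - xstar) : ℝ) ≤ 0 := by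
      have := grad_ineq' hΦconv hΦd (x s) xstar; linarith
    have h2 : 0 ≤ s^p := (Real.rpow_pos_of_pos hspos p).le
    have h3 : 0 ≤ s^(p-2) := (Real.rpow_pos_of_pos hspos _).le
    have h4 : (p+1)*(α-p)*(p-1) ≤ 0 := mul_nonpos_of_nonneg_of_nonpos (mul_nonneg hp1' (by linarith)) (by linarith)
    have t1 : (p+1)*s^p*((Φ (x s) - Φ xstar) - (inner ℝ (gradient Φ (x s)) (x s - xstar) : ℝ)) ≤ 0 :=
      mul_nonpos_of_nonneg_of_nonpos (mul_nonneg hp1' h2) h1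
    have t3 : ((p+1)*(α-p)*(p-1)/2)*(s^(p-2)*‖x s - xstar‖^2) ≤ 0 :=
      mul_nonpos_of_nonpos_of_nonneg (by linarith) (mul_nonneg h3 (sq_nonneg _))
    simp only [hG'def]
    linarith [t1, t3]
  have hrc : ∀ q : ℝ, ContinuousOn (fun s : ℝ => s ^ q) {s : ℝ | t₀ ≤ s} := fun q s hs =>
    (Real.continuousAt_rpow_const s q (Or.inl (ne_of_gt (lt_of_lt_of_le ht₀ hs)))).continuousWithinAt
  have c1 : Continuous fun s => Φ (x s) - Φ xstar := ((hΦd.continuous).comp hxc).sub continuous_const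
  have c2 : Continuous fun s => (inner ℝ (gradient Φ (x s)) (x s - xstar) : ℝ) :=
    (hgradc.comp hxc).inner (hxc.sub continuous_const)
  have c3 : Continuous fun s : ℝ => ‖deriv x s‖^2 := (hvc.norm).pow 2
  have c4 : Continuous fun s => ‖x s - xstar‖^2 := ((hxc.sub continuous_const).norm).pow 2
  have hfCO : ContinuousOn (fun s : ℝ => s^p * ‖deriv x s‖^2) {s : ℝ | t₀ ≤ s} :=
    (hrc p).mul c3.continuousOn
  have hG'CO : ContinuousOn G' {s : ℝ | t₀ ≤ s} := by
    simp only [hG'def]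
    exact (((continuousOn_const.mul (hrc p)).mul (c1.sub c2).continuousOn).add
      (continuousOn_const.mul ((hrc p).mul c3.continuousOn))).add
      (continuousOn_const.mul ((hrc (p-2)).mul c4.continuousOn))
  have bound : ∀ b : ℝ, t₀ ≤ b → (∫ s in t₀..b, ‖s^p * ‖deriv x s‖^2‖) ≤ G t₀ / (α - 3*(p+1)/2) := by
    intro b hb
    have hsub : uIcc t₀ b ⊆ {s : ℝ | t₀ ≤ s} := by
      rw [uIcc_of_le hb]; exact fun s hs => hs.1
    have hint1 : IntervalIntegrable G' volume t₀ b := (hG'CO.mono hsub).intervalIntegrable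
    have hintf : IntervalIntegrable (fun s : ℝ => (α - 3*(p+1)/2) * (s^p*‖deriv x s‖^2)) volume t₀ b :=
      (continuousOn_const.mul (hfCO.mono hsub)).intervalIntegrable
    have hFTC : ∫ s in t₀..b, G' s = G b - G t₀ :=
      intervalIntegral.integral_eq_sub_of_hasDerivAt (fun s hs => key s (hsub hs)) hint1
    have hmono : ∫ s in t₀..b, (α - 3*(p+1)/2) * (s^p*‖deriv x s‖^2) ≤ ∫ s in t₀..b, -G' s := by
      apply intervalIntegral.integral_mono_on hb hintf hint1.neg
      intro s hs
      have := hG'le s hs.1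
      simp only [Pi.neg_apply]
      linarith
    rw [intervalIntegral.integral_neg, hFTC] at hmono
    have hGb := hGpos b hb
    have h5 : ∫ s in t₀..b, (α - 3*(p+1)/2) * (s^p*‖deriv x s‖^2) = (α - 3*(p+1)/2) * ∫ s in t₀..b, s^p*‖deriv x s‖^2 :=
      intervalIntegral.integral_const_mul _ _
    have h6 : (∫ s in t₀..b, ‖s^p * ‖deriv x s‖^2‖) = ∫ s in t₀..b, s^p*‖deriv x s‖^2 := by
      apply intervalIntegral.integral_congr
      intro s hs
      have hspos : 0 < s := lt_of_lt_of_le ht₀ (hsub hs)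
      exact Real.norm_of_nonneg (mul_nonneg (Real.rpow_nonneg hspos.le p) (sq_nonneg _))
    rw [h5] at hmono
    have hIle := hmono.trans (by linarith : -(G b - G t₀) ≤ G t₀)
    rw [h6]
    exact (le_div_iff₀' hc).mpr hIle
  apply MeasureTheory.integrableOn_Ioi_of_intervalIntegral_norm_bounded (G t₀ / (α - 3*(p+1)/2)) t₀
    (b := fun r : ℝ => r) (l := Filter.atTop) ?_ Filter.tendsto_id ?_
  · intro i
    rcases le_or_gt t₀ i with h|h
    · have : ContinuousOn (fun s : ℝ => s^p * ‖deriv x s‖^2) (Icc t₀ i) :=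
        hfCO.mono (fun s hs => hs.1)
      exact (this.integrableOn_Icc).mono_set Ioc_subset_Icc_self
    · rw [Ioc_eq_empty (by exact fun hlt => absurd hlt (not_lt.mpr h.le))]
      exact integrableOn_empty
  · filter_upwards [Filter.eventually_ge_atTop t₀] with i hi using bound i hi

lemma integrable_exp_mono {H : Type*} [NormedAddCommGroup H] [InnerProductSpace ℝ H]
    {t₀ p q : ℝ} (ht₀ : 0 < t₀) (hpq : p ≤ q) {v : ℝ → H} (hvc : Continuous v)
    (hq : MeasureTheory.IntegrableOn (fun t : ℝ => t ^ q * ‖v t‖ ^ 2) (Set.Ioi t₀)) :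
    MeasureTheory.IntegrableOn (fun t : ℝ => t ^ p * ‖v t‖ ^ 2) (Set.Ioi t₀) := by
  have hmeas : AEStronglyMeasurable (fun t : ℝ => t ^ p * ‖v t‖ ^ 2)
      (volume.restrict (Ioi t₀)) := by
    apply ContinuousOn.aestronglyMeasurable _ measurableSet_Ioi
    intro t ht
    exact ((Real.continuousAt_rpow_const t p (Or.inl (ne_of_gt (ht₀.trans ht)))).mul
      ((hvc.norm.pow 2).continuousAt)).continuousWithinAt
  apply Integrable.mono (hq.const_mul (t₀ ^ (p - q))) hmeas
  rw [ae_restrict_iff' measurableSet_Ioi]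
  filter_upwards with t
  intro ht
  have htpos : 0 < t := ht₀.trans ht
  have h1 : t ^ p = t ^ (p - q) * t ^ q := by rw [← Real.rpow_add htpos]; congr 1; ring
  have h2 : t ^ (p - q) ≤ t₀ ^ (p - q) :=
    Real.rpow_le_rpow_of_nonpos ht₀ (le_of_lt ht) (by linarith)
  have hb1 : (0:ℝ) ≤ t ^ p * ‖v t‖ ^ 2 := by positivity
  have hb2 : (0:ℝ) ≤ t₀ ^ (p - q) * (t ^ q * ‖v t‖ ^ 2) := by positivity
  rw [Real.norm_of_nonneg hb1, Real.norm_of_nonneg hb2]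
  calc t ^ p * ‖v t‖ ^ 2 = t ^ (p - q) * (t ^ q * ‖v t‖ ^ 2) := by rw [h1]; ring
    _ ≤ t₀ ^ (p - q) * (t ^ q * ‖v t‖ ^ 2) :=
      mul_le_mul_of_nonneg_right h2 (by positivity)

/-- integral estimates of the speed along trajectories of `(AVD)_α`:
if `α > 3` then `∫_{t₀}^∞ t ‖ẋ(t)‖² dt < ∞`; if `α ≤ 3` then
`∫_{t₀}^∞ t^p ‖ẋ(t)‖² dt < ∞` for every `p < α - 2`. -/
theorem stmt_3
    {H : Type*} [NormedAddCommGroup H] [InnerProductSpace ℝ H] [CompleteSpace H]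
    (Φ : H → ℝ) (hΦconv : ConvexOn ℝ Set.univ Φ) (hΦC1 : ContDiff ℝ 1 Φ)
    (xstar : H) (hxstar : ∀ y : H, Φ xstar ≤ Φ y)
    (α t₀ : ℝ) (hα0 : 0 < α) (ht₀ : 0 < t₀)
    (x : ℝ → H) (hx : ContDiff ℝ 2 x)
    (hode : ∀ t : ℝ, t₀ ≤ t →
      deriv (deriv x) t + (α / t) • deriv x t + gradient Φ (x t) = 0) :
    (3 < α → MeasureTheory.IntegrableOn
        (fun t : ℝ => t * ‖deriv x t‖ ^ 2) (Set.Ioi t₀)) ∧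
    (α ≤ 3 → ∀ p : ℝ, p < α - 2 → MeasureTheory.IntegrableOn
        (fun t : ℝ => t ^ p * ‖deriv x t‖ ^ 2) (Set.Ioi t₀)) := by
  constructor
  · intro hα
    have h := main_integrable Φ hΦconv hΦC1 xstar hxstar α t₀ hα0 ht₀ x hx hode 1
      (by linarith) (by linarith) (by linarith) le_rfl
    simpa using h
  · intro hα3 p hp
    rcases le_or_gt p (-1) with hple | hpgt
    · have hvc : Continuous (deriv x) := hx.continuous_deriv one_le_two
      have h := main_integrable Φ hΦconv hΦC1 xstar hxstar α t₀ hα0 ht₀ x hx hode (-1)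
        le_rfl (by linarith) (by linarith) (by linarith)
      exact integrable_exp_mono ht₀ hple hvc h
    · exact main_integrable Φ hΦconv hΦC1 xstar hxstar α t₀ hα0 ht₀ x hx hode p
        hpgt.le (by linarith) (by linarith) (by linarith)
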